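/- Consider the multi-agent system ẋ_i(t) = sat(Σ_{j∈N_i}(x_j(t) − x_i(t))) with sat the linear saturation function with lower bound τ_l = 0, on a connected acyclic graph G. Then every state converges to the maximum of the initial states: for every agent i, x_i(t) → max_j x_j(0) as t → ∞. (Remark 2, x* = x_max(0).) -/

import Mathlib

open Filter

/-- The linear saturation function with lower bound `τ_l = 0`,
upper bound `τh > 0` and saturation level `r > 0`. -/
noncomputable def sat (τh r s : ℝ) : ℝ :=
  if s ≤ 0 then 0 else if s < r then τh / r * s else τh

lemma sat_eq' {τh r : ℝ} (hr : 0 < r) (s : ℝ) :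
    sat τh r s = τh / r * min (max s 0) r := by
  unfold sat
  rcases le_or_gt s 0 with h | h
  · rw [if_pos h, max_eq_right h, min_eq_left hr.le, mul_zero]
  · rw [if_neg (not_le.2 h), max_eq_left h.le]
    rcases lt_or_ge s r with h2 | h2
    · rw [if_pos h2, min_eq_left h2.le]
    · rw [if_neg (not_lt.2 h2), min_eq_right h2, div_mul_cancel₀ _ hr.ne']

lemma sat_nonneg {τh r : ℝ} (hτh : 0 < τh) (hr : 0 < r) (s : ℝ) : 0 ≤ sat τh r s := by
  rw [sat_eq' hr]
  exact mul_nonneg (div_nonneg hτh.le hr.le) (le_min (le_max_right _ _) hr.le)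

lemma sat_of_nonpos {τh r : ℝ} (s : ℝ) (hs : s ≤ 0) : sat τh r s = 0 := if_pos hs

lemma sat_pos {τh r : ℝ} (hτh : 0 < τh) (hr : 0 < r) {s : ℝ} (hs : 0 < s) :
    0 < sat τh r s := by
  rw [sat_eq' hr]
  exact mul_pos (div_pos hτh hr) (lt_min (lt_max_of_lt_left hs) hr)

lemma sat_continuous {τh r : ℝ} (hr : 0 < r) : Continuous (sat τh r) := by
  have : sat τh r = fun s => τh / r * min (max s 0) r := funext (sat_eq' hr)
  rw [this]
  fun_prop

lemma reach_ind {V : Type*} {G : SimpleGraph V} {P : V → Prop}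
    (h : ∀ a b, G.Adj a b → P a → P b) :
    ∀ {u v : V}, G.Walk u v → P u → P v
  | _, _, SimpleGraph.Walk.nil => id
  | _, _, SimpleGraph.Walk.cons h' p => fun hu => reach_ind h p (h _ _ h' hu)

/-- Remark 2: for the multi-agent system `ẋ_i = sat(Σ_{j∈N_i}(x_j − x_i))` on a
connected acyclic (tree) graph with the non-negative saturation (`τ_l = 0`),
every state converges to the maximum of the initial states. -/
theorem saturated_consensus_converges_to_max (N : ℕ) (G : SimpleGraph (Fin N))
    [DecidableRel G.Adj] (hconn : G.Connected) (hacyc : G.IsAcyclic)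
    (τh r : ℝ) (hτh : 0 < τh) (hr : 0 < r)
    (x : ℝ → Fin N → ℝ)
    (hx : ∀ i : Fin N, Differentiable ℝ (fun t => x t i))
    (hODE : ∀ i : Fin N, ∀ t : ℝ, 0 ≤ t →
      HasDerivAt (fun s => x s i)
        (sat τh r (∑ j ∈ G.neighborFinset i, (x t j - x t i))) t) :
    ∀ i : Fin N, Tendsto (fun t => x t i) atTop (nhds (⨆ j : Fin N, x 0 j)) := by
  classical
  haveI : Nonempty (Fin N) := hconn.nonempty
  set M : ℝ := ⨆ j : Fin N, x 0 j with hMdef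
  have hcont : ∀ i, Continuous fun t => x t i := fun i => (hx i).continuous
  set f : ℝ → ℝ := fun t => Finset.univ.sup' Finset.univ_nonempty (fun i => x t i) with hfdef
  have hle_f : ∀ t i, x t i ≤ f t := fun t i => Finset.le_sup' _ (Finset.mem_univ i)
  have hf0 : f 0 ≤ M := by
    apply Finset.sup'_le
    intro i _
    exact le_ciSup (Set.Finite.bddAbove (Set.finite_range _)) i
  have hfcont : Continuous f := by
    apply Continuous.finset_sup'_apply
    intro i _
    exact hcont i
  -- the sliding-max bound
  have key : ∀ t : ℝ, 0 ≤ t → f t ≤ M := by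
    intro b hb
    have H := image_le_of_liminf_slope_right_le_deriv_boundary
      (f := f) (a := 0) (b := b) (B := fun _ => M) (B' := fun _ => 0)
      (hfcont.continuousOn) hf0 continuousOn_const
      (fun t _ => hasDerivWithinAt_const t _ M) ?_ (Set.mem_Icc.2 ⟨hb, le_rfl⟩)
    · exact H
    · intro t ht ρ hρ
      apply Filter.Eventually.frequently
      have hev : ∀ᶠ z in nhdsWithin t (Set.Ioi t), ∀ j : Fin N, x z j - f t < ρ * (z - t) := by
        rw [eventually_all]
        intro j
        rcases eq_or_lt_of_le (hle_f t j) with heq | hlt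
        · -- j attains the max: derivative is 0
          have hsum : (∑ k ∈ G.neighborFinset j, (x t k - x t j)) ≤ 0 := by
            apply Finset.sum_nonpos
            intro k _
            have := hle_f t k
            rw [← heq] at this
            linarith
          have hd0 : HasDerivAt (fun s => x s j) 0 t := by
            have := hODE j t ht.1
            rwa [sat_of_nonpos _ hsum] at this
          have hslope := (hasDerivAt_iff_tendsto_slope.1 hd0).eventually_lt_const hρ
          have hslope' : ∀ᶠ z in nhdsWithin t (Set.Ioi t), slope (fun s => x s j) t z < ρ :=
            nhdsWithin_mono t (fun z hz => ne_of_gt hz) hslope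
          filter_upwards [hslope', self_mem_nhdsWithin] with z hz (hzt : t < z)
          rw [slope_def_field, div_lt_iff₀ (by linarith : (0:ℝ) < z - t)] at hz
          calc x z j - f t = x z j - x t j := by rw [heq]
            _ < ρ * (z - t) := hz
        · -- j strictly below the max: continuity
          have h1 : ∀ᶠ z in nhdsWithin t (Set.Ioi t), x z j < f t :=
            nhdsWithin_le_nhds (((hcont j).tendsto t).eventually_lt_const hlt)
          filter_upwards [h1, self_mem_nhdsWithin] with z hz (hzt : t < z)
          have : 0 < ρ * (z - t) := mul_pos hρ (by linarith)
          linarith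
      filter_upwards [hev, self_mem_nhdsWithin] with z hz (hzt : t < z)
      have hfz : f z < f t + ρ * (z - t) := by
        apply (Finset.sup'_lt_iff _).2
        intro j _
        have := hz j
        linarith
      rw [slope_def_field, div_lt_iff₀ (by linarith : (0:ℝ) < z - t)]
      linarith
  have hub : ∀ i, ∀ t : ℝ, 0 ≤ t → x t i ≤ M := fun i t ht => (hle_f t i).trans (key t ht)
  -- monotonicity of each agent on [0, ∞)
  have hmono : ∀ i, MonotoneOn (fun t => x t i) (Set.Ici 0) := by
    intro i
    apply monotoneOn_of_deriv_nonneg (convex_Ici 0) (hcont i).continuousOn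
      ((hx i).differentiableOn)
    intro t ht
    rw [interior_Ici] at ht
    rw [(hODE i t (le_of_lt ht)).deriv]
    exact sat_nonneg hτh hr _
  -- limits
  set g : Fin N → ℝ → ℝ := fun i t => x (max t 0) i with hgdef
  have hgmono : ∀ i, Monotone (g i) := by
    intro i s t hst
    exact hmono i (le_max_right s 0) (le_max_right t 0) (max_le_max hst le_rfl)
  have hgub : ∀ i t, g i t ≤ M := fun i t => hub i _ (le_max_right t 0)
  have hgbdd : ∀ i, BddAbove (Set.range (g i)) := by
    intro i
    exact ⟨M, by rintro _ ⟨t, rfl⟩; exact hgub i t⟩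
  set L : Fin N → ℝ := fun i => ⨆ t : ℝ, g i t with hLdef
  have hxtend : ∀ i, Tendsto (fun t => x t i) atTop (nhds (L i)) := by
    intro i
    have h1 : Tendsto (g i) atTop (nhds (L i)) := tendsto_atTop_ciSup (hgmono i) (hgbdd i)
    apply h1.congr'
    filter_upwards [eventually_ge_atTop (0:ℝ)] with t ht
    simp [hgdef, max_eq_left ht]
  have hLleM : ∀ i, L i ≤ M := fun i => ciSup_le (hgub i)
  have hxleL : ∀ i, ∀ t : ℝ, 0 ≤ t → x t i ≤ L i := by
    intro i t ht
    have : g i t ≤ L i := le_ciSup (hgbdd i) t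
    simpa [hgdef, max_eq_left ht] using this
  -- limit sums are nonpositive
  set S : Fin N → ℝ := fun i => ∑ j ∈ G.neighborFinset i, (L j - L i) with hSdef
  have hStend : ∀ i, Tendsto (fun t => ∑ j ∈ G.neighborFinset i, (x t j - x t i))
      atTop (nhds (S i)) := by
    intro i
    exact tendsto_finset_sum _ (fun j _ => (hxtend j).sub (hxtend i))
  have hS_nonpos : ∀ i, S i ≤ 0 := by
    intro i
    by_contra hpos
    push_neg at hpos
    set c : ℝ := sat τh r (S i) with hcdef
    have hc : 0 < c := sat_pos hτh hr hpos
    have hctend : Tendsto (fun t => sat τh r (∑ j ∈ G.neighborFinset i, (x t j - x t i)))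
        atTop (nhds c) := ((sat_continuous hr).tendsto _).comp (hStend i)
    obtain ⟨T, hT⟩ := (eventually_atTop.1 (hctend.eventually (eventually_gt_nhds (half_lt_self hc))))
    set T' : ℝ := max T 0 with hT'def
    have hT'0 : (0:ℝ) ≤ T' := le_max_right T 0
    -- h(t) = x t i - c/2 * t is monotone on [T', ∞)
    have hhmono : MonotoneOn (fun t => x t i - c / 2 * t) (Set.Ici T') := by
      apply monotoneOn_of_deriv_nonneg (convex_Ici T')
      · exact ((hcont i).sub (continuous_const.mul continuous_id)).continuousOn
      · exact ((hx i).sub ((differentiable_id.const_mul _))).differentiableOn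
      · intro t ht
        rw [interior_Ici] at ht
        have ht0 : (0:ℝ) ≤ t := le_trans hT'0 (le_of_lt ht)
        have hder : HasDerivAt (fun s => x s i - c / 2 * s)
            (sat τh r (∑ j ∈ G.neighborFinset i, (x t j - x t i)) - c / 2) t := by
          exact (hODE i t ht0).sub (by simpa using (hasDerivAt_id' t).const_mul (c / 2))
        rw [hder.deriv]
        have := hT t (le_trans (le_max_left T 0) (le_of_lt ht))
        linarith
    -- choose a large time to contradict the upper bound
    set t₁ : ℝ := T' + 2 / c * (M - x T' i) + 1 with ht₁def
    have hMx : x T' i ≤ M := hub i T' hT'0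
    have ht₁T' : T' ≤ t₁ := by
      have h2 : 0 ≤ 2 / c * (M - x T' i) := mul_nonneg (by positivity) (by linarith)
      rw [ht₁def]
      linarith
    have := hhmono (Set.mem_Ici.2 le_rfl) (Set.mem_Ici.2 ht₁T') ht₁T'
    have hgrow : x T' i + c / 2 * (t₁ - T') ≤ x t₁ i := by linarith
    have hcalc : c / 2 * (t₁ - T') = (M - x T' i) + c / 2 := by
      rw [ht₁def]
      field_simp
      ring
    have hxt₁ : x t₁ i ≤ M := hub i t₁ (le_trans hT'0 ht₁T')
    rw [hcalc] at hgrow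
    linarith
  -- total antisymmetric sum is zero
  have hTot : (∑ i : Fin N, S i) = 0 := by
    have e1 : ∀ (w : Fin N → ℝ), (∑ i : Fin N, ∑ j ∈ G.neighborFinset i, (w j - w i))
        = ∑ i : Fin N, ∑ j : Fin N, if G.Adj i j then w j - w i else 0 := by
      intro w
      refine Finset.sum_congr rfl fun i _ => ?_
      rw [SimpleGraph.neighborFinset_eq_filter, Finset.sum_filter]
    have : (∑ i : Fin N, S i) = -(∑ i : Fin N, S i) := by
      calc (∑ i : Fin N, S i)
          = ∑ i : Fin N, ∑ j : Fin N, if G.Adj i j then L j - L i else 0 := e1 L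
        _ = ∑ j : Fin N, ∑ i : Fin N, if G.Adj i j then L j - L i else 0 := Finset.sum_comm
        _ = ∑ j : Fin N, ∑ i : Fin N, -(if G.Adj j i then L i - L j else 0) := by
            refine Finset.sum_congr rfl fun j _ => Finset.sum_congr rfl fun i _ => ?_
            by_cases h : G.Adj i j
            · rw [if_pos h, if_pos h.symm]; ring
            · rw [if_neg h, if_neg (fun h' => h h'.symm), neg_zero]
        _ = -∑ j : Fin N, ∑ i : Fin N, (if G.Adj j i then L i - L j else 0) := by
            simp
        _ = -(∑ i : Fin N, S i) := by rw [← e1 L]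
    linarith
  have hS0 : ∀ i, S i = 0 := by
    have := (Finset.sum_eq_zero_iff_of_nonpos (fun i _ => hS_nonpos i)).1 hTot
    exact fun i => this i (Finset.mem_univ i)
  -- harmonicity implies constancy: every L equals M
  obtain ⟨i₁, hi₁⟩ := exists_eq_ciSup_of_finite (f := fun j : Fin N => x 0 j)
  have hLi₁ : L i₁ = M := le_antisymm (hLleM i₁) (by
    rw [← hMdef] at hi₁
    rw [← hi₁]
    exact hxleL i₁ 0 le_rfl)
  have hadj : ∀ a b : Fin N, G.Adj a b → L a = M → L b = M := by
    intro a b hab ha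
    have hterms : ∀ k ∈ G.neighborFinset a, L k - L a ≤ 0 := by
      intro k _
      have := hLleM k
      rw [ha]; linarith
    have := (Finset.sum_eq_zero_iff_of_nonpos hterms).1 (hS0 a) b
      ((SimpleGraph.mem_neighborFinset G a b).2 hab)
    have hLb := hLleM b
    rw [ha] at this
    linarith
  have hLall : ∀ v, L v = M := by
    intro v
    obtain ⟨w⟩ := hconn i₁ v
    exact reach_ind hadj w hLi₁
  intro i
  rw [← hLall i]
  exact hxtend i
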